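/- For every n ≥ 1, N = 2ⁿ, and i ∈ [1..2N], let R denote the i-th row of ShiftBin_N, viewed as a 1D string of length N(n+2). Then every 1D SLP deriving a string that contains R as a substring has at least min{i, 2N−i+1} nonterminals. -/

import Mathlib

/-!
## Two-dimensional strings.
A 2D string over alphabet `A` of size `h × w` is represented canonically:
`f i j` is `some` of the character in (0-indexed) row `i`, column `j` when
`i < h` and `j < w`, and `none` outside of the rectangle.  All operations
below produce such canonical representations, so equality of 2D strings
built from them coincides with equality of the dimensions and of all entries.
-/
structure Str2 (A : Type) where
  h : ℕ
  w : ℕ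
  f : ℕ → ℕ → Option A

namespace Str2

variable {A : Type}

/-- Canonical constructor: pads with `none` outside of the `h × w` rectangle. -/
def mk' (h w : ℕ) (g : ℕ → ℕ → Option A) : Str2 A :=
  ⟨h, w, fun i j => if i < h ∧ j < w then g i j else none⟩

/-- The empty 2D string. -/
def empty : Str2 A := ⟨0, 0, fun _ _ => none⟩

/-- The `1 × 1` 2D string consisting of a single character. -/
def single (a : A) : Str2 A := mk' 1 1 fun _ _ => some a

/-- Horizontal concatenation `S ⊞ T` (meaningful when the heights agree). -/
def hcat (S T : Str2 A) : Str2 A :=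
  mk' S.h (S.w + T.w) fun i j => if j < S.w then S.f i j else T.f i (j - S.w)

/-- Vertical concatenation `S ⊟ T` (meaningful when the widths agree). -/
def vcat (S T : Str2 A) : Str2 A :=
  mk' (S.h + T.h) S.w fun i j => if i < S.h then S.f i j else T.f (i - S.h) j

/-- Horizontal concatenation `S₁ ⊞ S₂ ⊞ ⋯ ⊞ S_k` of a list of 2D strings. -/
def hcatList : List (Str2 A) → Str2 A
  | [] => empty
  | S :: rest => rest.foldl hcat S

/-- Vertical concatenation `S₁ ⊟ S₂ ⊟ ⋯ ⊟ S_k` of a list of 2D strings. -/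
def vcatList : List (Str2 A) → Str2 A
  | [] => empty
  | S :: rest => rest.foldl vcat S

/-- The transpose. -/
def transpose (S : Str2 A) : Str2 A := mk' S.w S.h fun i j => S.f j i

/-- The `i`-th row (0-indexed) of `S`, as a `1 × w` 2D string. -/
def rowStr (S : Str2 A) (i : ℕ) : Str2 A := mk' 1 S.w fun _ j => S.f i j

/-- The `j`-th column (0-indexed) of `S`, read top to bottom, as a `1 × h` 2D string. -/
def colStr (S : Str2 A) (j : ℕ) : Str2 A := mk' 1 S.h fun _ i => S.f i j

/-- A height-one 2D string, viewed as an ordinary (1D) string, i.e. a list. -/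
def toList (S : Str2 A) : List A := (List.range S.w).filterMap fun j => S.f 0 j

/-- An ordinary (1D) string viewed as a height-one 2D string. -/
def ofList (l : List A) : Str2 A := mk' 1 l.length fun _ j => l[j]?

/-- The concatenation of all rows of `S` from top to bottom,
as a height-one 2D string of width `h * w`. -/
def rowsConcat (S : Str2 A) : Str2 A :=
  mk' 1 (S.h * S.w) fun _ j => S.f (j / S.w) (j % S.w)

end Str2

/-- The right-hand side of a production of a 2D SLP: a single character,
a horizontal concatenation of two nonterminals, or a vertical concatenation
of two nonterminals. -/
inductive Rhs2 (A V : Type) where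
  | chr : A → Rhs2 A V
  | horiz : V → V → Rhs2 A V
  | vert : V → V → Rhs2 A V

/-- A two-dimensional straight-line program over the alphabet `A`:
a finite set `V` of nonterminals, a starting nonterminal, and a production
map `rhs`.  Acyclicity of the relation "appears in the right-hand side of"
is witnessed by the function `rank`, which strictly decreases from the
left-hand side of each production to the nonterminals on its right-hand side. -/
structure SLP2 (A : Type) where
  V : Type
  fintypeV : Fintype V
  start : V
  rhs : V → Rhs2 A V
  rank : V → ℕ
  rank_horiz : ∀ {X Y Z}, rhs X = Rhs2.horiz Y Z → rank Y < rank X ∧ rank Z < rank X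
  rank_vert : ∀ {X Y Z}, rhs X = Rhs2.vert Y Z → rank Y < rank X ∧ rank Z < rank X

namespace SLP2

variable {A : Type}

/-- Fuel-based evaluation of expansions (with enough fuel it computes the
unique expansion of a nonterminal). -/
def expAux (G : SLP2 A) : ℕ → G.V → Str2 A
  | 0, _ => Str2.empty
  | n + 1, X =>
    match G.rhs X with
    | .chr a => Str2.single a
    | .horiz Y Z => (G.expAux n Y).hcat (G.expAux n Z)
    | .vert Y Z => (G.expAux n Y).vcat (G.expAux n Z)

/-- The (unique) expansion of a nonterminal `X`: since `rank` strictly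
decreases along productions, fuel `rank X + 1` always suffices. -/
def expNT (G : SLP2 A) (X : G.V) : Str2 A := G.expAux (G.rank X + 1) X

/-- The 2D string derived by the SLP. -/
def exp (G : SLP2 A) : Str2 A := G.expNT G.start

/-- Fuel-based computation of the depth of the derivation tree below a
nonterminal (a node labeled by a production `chr σ` has a single leaf child). -/
def depthAux (G : SLP2 A) : ℕ → G.V → ℕ
  | 0, _ => 0
  | n + 1, X =>
    match G.rhs X with
    | .chr _ => 1
    | .horiz Y Z => 1 + max (G.depthAux n Y) (G.depthAux n Z)
    | .vert Y Z => 1 + max (G.depthAux n Y) (G.depthAux n Z)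

/-- The depth of the derivation tree below nonterminal `X`. -/
def depthNT (G : SLP2 A) (X : G.V) : ℕ := G.depthAux (G.rank X + 1) X

/-- The depth of the SLP: the depth of its derivation tree. -/
def depth (G : SLP2 A) : ℕ := G.depthNT G.start

/-- The size of the SLP: the total number of symbols on the right-hand
sides of all productions. -/
def size (G : SLP2 A) : ℕ :=
  letI := G.fintypeV
  ∑ X : G.V, (match G.rhs X with
    | .chr _ => 1
    | .horiz _ _ => 2
    | .vert _ _ => 2)

/-- The number of nonterminals of the SLP. -/
def numNT (G : SLP2 A) : ℕ :=
  letI := G.fintypeV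
  Fintype.card G.V

/-- Well-formedness: dimensions match in every production, i.e. in a
horizontal concatenation both arguments have equal heights, and in a
vertical concatenation both arguments have equal widths. -/
def WF (G : SLP2 A) : Prop :=
  ∀ X : G.V,
    match G.rhs X with
    | .chr _ => True
    | .horiz Y Z => (G.expNT Y).h = (G.expNT Z).h
    | .vert Y Z => (G.expNT Y).w = (G.expNT Z).w

/-- A 1D SLP: a 2D SLP that uses only horizontal concatenations and derives
a string of height `1`. -/
def OneDim (G : SLP2 A) : Prop :=
  (∀ X Y Z, G.rhs X ≠ Rhs2.vert Y Z) ∧ (G.exp).h = 1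

end SLP2
/-- The alphabet `{0, 1, $}`. -/
inductive Alpha3 : Type where
  | zero : Alpha3
  | one : Alpha3
  | dollar : Alpha3
deriving DecidableEq

instance instFintypeAlpha3 : Fintype Alpha3 :=
  ⟨{Alpha3.zero, Alpha3.one, Alpha3.dollar}, fun x => by cases x <;> simp⟩

/-- For `N = 2^n`, the 2D string `Bin_N` of size `N × (n+2)` whose `i`-th row
(1-indexed) is the `n`-bit binary representation (most significant bit first)
of `i - 1`, surrounded by one `$` symbol on each side. -/
def binStr (n : ℕ) : Str2 Alpha3 :=
  Str2.mk' (2 ^ n) (n + 2) fun i j =>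
    some (if j = 0 ∨ j = n + 1 then Alpha3.dollar
      else if Nat.testBit i (n - j) then Alpha3.one else Alpha3.zero)

/-- For `N = 2^n`, the 2D string `ShiftBin_N` of size `2N × N(n+2)`: for every
`i ∈ [0..N-1]`, the columns `i(n+2)+1` through `(i+1)(n+2)` (1-indexed) consist
of `i` rows filled with `0`'s, followed by a copy of `Bin_N`, followed by
`N - i` rows filled with `0`'s. -/
def shiftBinStr (n : ℕ) : Str2 Alpha3 :=
  Str2.mk' (2 * 2 ^ n) (2 ^ n * (n + 2)) fun r c =>
    let i := c / (n + 2)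
    if i ≤ r ∧ r < i + 2 ^ n then (binStr n).f (r - i) (c % (n + 2)) else some Alpha3.zero

/-- A binary string `b`, surrounded by one `$` symbol on each side, as a string
over an alphabet with distinguished symbols `z` (zero), `o` (one), `d` (dollar). -/
def dollarWrap {A : Type} (z o d : A) (b : List Bool) : List A :=
  d :: (b.map fun x => if x then o else z) ++ [d]

/-- The exponent of `M'`: the largest `m` such that `M' = 2^m` satisfies
`M' * (log₂ M' + 2) ≤ M / 2`, i.e. `2 * 2^m * (m + 2) ≤ M`. -/
def mExp (M : ℕ) : ℕ := Nat.findGreatest (fun m => 2 * 2 ^ m * (m + 2) ≤ M) M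

/-- The 2D string `C_{N,M}` of size `N × M`: with `M'` the largest power of two
such that `M' * (log₂ M' + 2) ≤ M / 2` and `B = ShiftBin_{M'}` (of size
`2M' × M'(log₂ M' + 2)`), it consists of a left block of `⌊N/(2M')⌋` vertically
concatenated copies of `B` padded below with `0`'s to height `N`; to its right,
a right block of `M'` rows of `0`'s followed by `⌊(N-M')/(2M')⌋` vertically
concatenated copies of `B`, padded below with `0`'s to height `N`; and columns
of `0`'s padding the total width to `M`. -/
def gadgetC (N M : ℕ) : Str2 Alpha3 :=
  let n := mExp M
  let M' := 2 ^ n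
  let W := M' * (n + 2)
  Str2.mk' N M fun r c =>
    if c < W then
      (if r < 2 * M' * (N / (2 * M')) then (shiftBinStr n).f (r % (2 * M')) c
       else some Alpha3.zero)
    else if c < 2 * W then
      (if M' ≤ r ∧ r < M' + 2 * M' * ((N - M') / (2 * M'))
       then (shiftBinStr n).f ((r - M') % (2 * M')) (c - W)
       else some Alpha3.zero)
    else some Alpha3.zero

section Aux

open List

/-- Splitting an infix of a concatenation. -/
lemma infix_append_split {A : Type} {w a b : List A} (h : w <:+: a ++ b) :
    w <:+: a ∨ w <:+: b ∨
      ∃ u v, w = u ++ v ∧ u ≠ [] ∧ v ≠ [] ∧ u <:+ a ∧ v <+: b := by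
  obtain ⟨s, t, hst⟩ := h
  rcases le_or_gt (s.length + w.length) a.length with hle | hgt
  · -- w is an infix of a
    left
    have hpre : s ++ w <+: a := by
      apply List.prefix_of_prefix_length_le (l₃ := a ++ b)
      · exact ⟨t, by simpa [List.append_assoc] using hst⟩
      · exact ⟨b, rfl⟩
      · simpa using hle
    obtain ⟨t', ht'⟩ := hpre
    exact ⟨s, t', by simpa [List.append_assoc] using ht'⟩
  rcases le_or_gt a.length s.length with hle2 | hgt2
  · -- w is an infix of b
    right; left
    have hsuf : w ++ t <:+ b := by
      apply List.suffix_of_suffix_length_le (l₃ := a ++ b)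
      · exact ⟨s, by simpa [List.append_assoc] using hst⟩
      · exact ⟨a, rfl⟩
      · have := congrArg List.length hst
        simp at this
        simp; omega
    obtain ⟨s', hs'⟩ := hsuf
    exact ⟨s', t, by simpa [List.append_assoc] using hs'⟩
  · right; right
    refine ⟨w.take (a.length - s.length), w.drop (a.length - s.length),
      (List.take_append_drop _ _).symm, ?_, ?_, ?_, ?_⟩
    · have : (w.take (a.length - s.length)).length = a.length - s.length := by
        simp; omega
      intro hnil; rw [hnil] at this; simp at this; omega
    · have : (w.drop (a.length - s.length)).length = w.length - (a.length - s.length) := by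
        simp
      intro hnil; rw [hnil] at this; simp at this; omega
    · -- u is a suffix of a
      have hpre : s ++ w.take (a.length - s.length) <+: a := by
        apply List.prefix_of_prefix_length_le (l₃ := a ++ b)
        · refine ⟨w.drop (a.length - s.length) ++ t, ?_⟩
          rw [← List.append_assoc, List.append_assoc s, List.take_append_drop]
          exact hst
        · exact ⟨b, rfl⟩
        · simp; omega
      have heq : s ++ w.take (a.length - s.length) = a :=
        hpre.eq_of_length (by simp; omega)
      exact ⟨s, heq⟩
    · -- v is a prefix of b
      have hsuf : w.drop (a.length - s.length) ++ t <:+ a ++ b := by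
        refine ⟨s ++ w.take (a.length - s.length), ?_⟩
        rw [List.append_assoc, ← List.append_assoc (w.take _), List.take_append_drop,
          ← List.append_assoc]
        exact hst
      have hlen : (w.drop (a.length - s.length) ++ t).length = b.length := by
        have := congrArg List.length hst
        simp at this ⊢; omega
      have heq : w.drop (a.length - s.length) ++ t = b :=
        (List.suffix_of_suffix_length_le hsuf ⟨a, rfl⟩ (by omega)).eq_of_length hlen
      exact ⟨t, heq⟩

end Aux

namespace Str2

variable {A : Type}

lemma filterMap_range_getElem? (l : List A) :
    (List.range l.length).filterMap (fun j => l[j]?) = l := by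
  induction l with
  | nil => simp
  | cons a l ih =>
    rw [List.length_cons, List.range_succ_eq_map, List.filterMap_cons, List.filterMap_map]
    simp only [List.getElem?_cons_zero]
    have hc : ((fun j => (a :: l)[j]?) ∘ Nat.succ) = fun j => l[j]? := by
      funext j; simp
    rw [hc, ih]

lemma toList_ofList (l : List A) : (ofList l).toList = l := by
  simp only [toList, ofList, mk']
  have h := List.filterMap_congr (l := List.range l.length)
    (f := fun j => if (0:ℕ) < 1 ∧ j < l.length then l[j]? else none)
    (g := fun j => l[j]?)
    (by intro a ha; simp only [List.mem_range] at ha; simp [ha])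
  rw [h, filterMap_range_getElem?]

lemma toList_mk'_row (w : ℕ) (f : ℕ → ℕ → Option A) (g : ℕ → A)
    (hf : ∀ j < w, f 0 j = some (g j)) :
    (mk' 1 w f).toList = (List.range w).map g := by
  simp only [toList, mk']
  have h := List.filterMap_congr (l := List.range w)
    (f := fun j => if (0:ℕ) < 1 ∧ j < w then f 0 j else none)
    (g := fun j => some (g j))
    (by intro a ha; simp only [List.mem_range] at ha; simp [ha, hf a ha])
  rw [h]
  exact congrFun List.filterMap_eq_map _

lemma single_eq_ofList (a : A) : (single a : Str2 A) = ofList [a] := by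
  simp only [single, ofList, mk', List.length_cons, List.length_nil]
  congr 1
  funext i j
  by_cases hi : i < 1
  · by_cases hj : j < 1
    · have hj0 : j = 0 := by omega
      subst hj0; simp [hi]
    · simp [hj]
  · simp [hi]

lemma hcat_ofList (l m : List A) : (ofList l).hcat (ofList m) = ofList (l ++ m) := by
  simp only [hcat, ofList, mk', List.length_append]
  congr 1
  funext i j
  by_cases hi : i < 1
  · by_cases hj : j < l.length + m.length
    · simp only [hi, hj, and_self, if_true, true_and]
      by_cases hjl : j < l.length
      · rw [if_pos hjl, if_pos hjl, List.getElem?_append_left hjl]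
      · have hjl' : l.length ≤ j := Nat.not_lt.1 hjl
        rw [if_neg hjl, if_pos (show j - l.length < m.length by omega),
          List.getElem?_append_right hjl']
    · simp [hj]
  · simp [hi]

end Str2

namespace SLP2

variable {A : Type} {G : SLP2 A}

lemma expAux_congr : ∀ (r : ℕ) (X : G.V), G.rank X ≤ r →
    ∀ k₁ k₂, G.rank X < k₁ → G.rank X < k₂ → G.expAux k₁ X = G.expAux k₂ X := by
  intro r
  induction r with
  | zero =>
    intro X hX k₁ k₂ h1 h2
    obtain ⟨a, rfl⟩ : ∃ m, k₁ = m + 1 := ⟨k₁ - 1, by omega⟩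
    obtain ⟨b, rfl⟩ : ∃ m, k₂ = m + 1 := ⟨k₂ - 1, by omega⟩
    cases hr : G.rhs X with
    | chr c => simp [expAux, hr]
    | horiz Y Z => exact absurd (G.rank_horiz hr).1 (by omega)
    | vert Y Z => exact absurd (G.rank_vert hr).1 (by omega)
  | succ r ih =>
    intro X hX k₁ k₂ h1 h2
    obtain ⟨a, rfl⟩ : ∃ m, k₁ = m + 1 := ⟨k₁ - 1, by omega⟩
    obtain ⟨b, rfl⟩ : ∃ m, k₂ = m + 1 := ⟨k₂ - 1, by omega⟩
    cases hr : G.rhs X with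
    | chr c => simp [expAux, hr]
    | horiz Y Z =>
      obtain ⟨hY, hZ⟩ := G.rank_horiz hr
      simp only [expAux, hr]
      rw [ih Y (by omega) a b (by omega) (by omega), ih Z (by omega) a b (by omega) (by omega)]
    | vert Y Z =>
      obtain ⟨hY, hZ⟩ := G.rank_vert hr
      simp only [expAux, hr]
      rw [ih Y (by omega) a b (by omega) (by omega), ih Z (by omega) a b (by omega) (by omega)]

lemma expNT_chr {X : G.V} {a : A} (h : G.rhs X = Rhs2.chr a) : G.expNT X = Str2.single a := by
  simp [expNT, expAux, h]

lemma expNT_horiz {X Y Z : G.V} (h : G.rhs X = Rhs2.horiz Y Z) :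
    G.expNT X = (G.expNT Y).hcat (G.expNT Z) := by
  have hY := (G.rank_horiz h).1
  have hZ := (G.rank_horiz h).2
  have h0 : G.expNT X = (G.expAux (G.rank X) Y).hcat (G.expAux (G.rank X) Z) := by
    rw [expNT]
    simp only [expAux, h]
  rw [h0, expAux_congr (G.rank Y) Y le_rfl (G.rank X) (G.rank Y + 1) hY (by omega),
      expAux_congr (G.rank Z) Z le_rfl (G.rank X) (G.rank Z + 1) hZ (by omega)]
  rfl

lemma expNT_eq_ofList (hnv : ∀ X Y Z, G.rhs X ≠ Rhs2.vert Y Z) :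
    ∀ (X : G.V), G.expNT X = Str2.ofList (G.expNT X).toList := by
  suffices h : ∀ (r : ℕ) (X : G.V), G.rank X ≤ r → ∃ l, G.expNT X = Str2.ofList l by
    intro X
    obtain ⟨l, hl⟩ := h (G.rank X) X le_rfl
    rw [hl, Str2.toList_ofList]
  intro r
  induction r with
  | zero =>
    intro X hX
    cases hr : G.rhs X with
    | chr a => exact ⟨[a], by rw [expNT_chr hr, Str2.single_eq_ofList]⟩
    | horiz Y Z => exact absurd (G.rank_horiz hr).1 (by omega)
    | vert Y Z => exact absurd hr (hnv X Y Z)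
  | succ r ih =>
    intro X hX
    cases hr : G.rhs X with
    | chr a => exact ⟨[a], by rw [expNT_chr hr, Str2.single_eq_ofList]⟩
    | vert Y Z => exact absurd hr (hnv X Y Z)
    | horiz Y Z =>
      obtain ⟨hY, hZ⟩ := G.rank_horiz hr
      obtain ⟨l₁, h₁⟩ := ih Y (by omega)
      obtain ⟨l₂, h₂⟩ := ih Z (by omega)
      exact ⟨l₁ ++ l₂, by rw [expNT_horiz hr, h₁, h₂, Str2.hcat_ofList]⟩

lemma toList_expNT_horiz (hnv : ∀ X Y Z, G.rhs X ≠ Rhs2.vert Y Z) {X Y Z : G.V}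
    (h : G.rhs X = Rhs2.horiz Y Z) :
    (G.expNT X).toList = (G.expNT Y).toList ++ (G.expNT Z).toList := by
  rw [expNT_horiz h, expNT_eq_ofList hnv Y, expNT_eq_ofList hnv Z, Str2.hcat_ofList,
    Str2.toList_ofList, ← expNT_eq_ofList hnv Y, ← expNT_eq_ofList hnv Z]

lemma crossing (hnv : ∀ X Y Z, G.rhs X ≠ Rhs2.vert Y Z) (w : List A) (hw : 2 ≤ w.length) :
    ∀ (r : ℕ) (X : G.V), G.rank X ≤ r → w <:+: (G.expNT X).toList →
    ∃ (X' : G.V) (Y Z : G.V) (u v : List A), G.rhs X' = Rhs2.horiz Y Z ∧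
      w = u ++ v ∧ u ≠ [] ∧ v ≠ [] ∧
      u <:+ (G.expNT Y).toList ∧ v <+: (G.expNT Z).toList := by
  intro r
  induction r with
  | zero =>
    intro X hX hinf
    cases hr : G.rhs X with
    | chr a =>
      rw [expNT_chr hr, Str2.single_eq_ofList, Str2.toList_ofList] at hinf
      have := hinf.length_le
      simp at this
      omega
    | horiz Y Z => exact absurd (G.rank_horiz hr).1 (by omega)
    | vert Y Z => exact absurd hr (hnv X Y Z)
  | succ r ih =>
    intro X hX hinf
    cases hr : G.rhs X with
    | chr a =>
      rw [expNT_chr hr, Str2.single_eq_ofList, Str2.toList_ofList] at hinf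
      have := hinf.length_le
      simp at this
      omega
    | vert Y Z => exact absurd hr (hnv X Y Z)
    | horiz Y Z =>
      obtain ⟨hY, hZ⟩ := G.rank_horiz hr
      rw [toList_expNT_horiz hnv hr] at hinf
      rcases infix_append_split hinf with h | h | ⟨u, v, h1, h2, h3, h4, h5⟩
      · exact ih Y (by omega) h
      · exact ih Z (by omega) h
      · exact ⟨X, Y, Z, u, v, hr, h1, h2, h3, h4, h5⟩

end SLP2

/-- The dollar-wrapped `n`-bit binary representation of `k`. -/
def dword (n k : ℕ) : List Alpha3 :=
  (List.range (n+2)).map fun t =>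
    if t = 0 ∨ t = n+1 then Alpha3.dollar
    else if Nat.testBit k (n - t) then Alpha3.one else Alpha3.zero

/-- The all-zero word of length `n+2`. -/
def zword (n : ℕ) : List Alpha3 := (List.range (n+2)).map fun _ => Alpha3.zero

/-- The words we care about: either the all-zero word, or a word with `$`
exactly at the two end positions. -/
def Form (n : ℕ) (w : List Alpha3) : Prop :=
  (w.length = n + 2) ∧
    ((∀ t, t < n + 2 → w[t]? = some Alpha3.zero) ∨
     (∀ t, t < n + 2 → (w[t]? = some Alpha3.dollar ↔ t = 0 ∨ t = n + 1)))

@[simp] lemma length_dword (n k : ℕ) : (dword n k).length = n + 2 := by simp [dword]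

@[simp] lemma length_zword (n : ℕ) : (zword n).length = n + 2 := by simp [zword]

lemma getElem?_dword (n k t : ℕ) (ht : t < n + 2) :
    (dword n k)[t]? = some (if t = 0 ∨ t = n+1 then Alpha3.dollar
      else if Nat.testBit k (n - t) then Alpha3.one else Alpha3.zero) := by
  rw [List.getElem?_eq_getElem (by simp [dword]; omega)]
  simp [dword]

lemma getElem?_zword (n t : ℕ) (ht : t < n + 2) :
    (zword n)[t]? = some Alpha3.zero := by
  rw [List.getElem?_eq_getElem (by simp [zword]; omega)]
  simp [zword]

lemma form_dword (n k : ℕ) : Form n (dword n k) := by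
  refine ⟨length_dword n k, Or.inr fun t ht => ?_⟩
  rw [getElem?_dword n k t ht]
  by_cases h : t = 0 ∨ t = n + 1
  · simp [h]
  · simp only [h, if_false, iff_false]
    by_cases hb : Nat.testBit k (n - t) <;> simp [hb]

lemma form_zword (n : ℕ) : Form n (zword n) :=
  ⟨length_zword n, Or.inl fun t ht => getElem?_zword n t ht⟩

lemma zero_case_eq {n : ℕ} {w₁ w₂ : List Alpha3}
    (hl₁ : w₁.length = n + 2) (hl₂ : w₂.length = n + 2)
    (h1 : ∀ t, t < n + 2 → w₁[t]? = some Alpha3.zero)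
    (h2 : ∀ t, t < n + 2 → w₂[t]? = some Alpha3.zero) : w₁ = w₂ := by
  apply List.ext_getElem?
  intro t
  by_cases ht : t < n + 2
  · rw [h1 t ht, h2 t ht]
  · rw [List.getElem?_eq_none (by omega), List.getElem?_eq_none (by omega)]

/-- Key injectivity lemma: two words of `Form n` crossing the same cut are equal. -/
lemma form_eq_of_cross_aux {n : ℕ} {w₁ w₂ : List Alpha3} (h1 : Form n w₁) (h2 : Form n w₂)
    {Y Z : List Alpha3} {u₁ v₁ u₂ v₂ : List Alpha3}
    (e₁ : w₁ = u₁ ++ v₁) (hu₁ : u₁ ≠ []) (hv₁ : v₁ ≠ []) (su₁ : u₁ <:+ Y) (pv₁ : v₁ <+: Z)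
    (e₂ : w₂ = u₂ ++ v₂) (hu₂ : u₂ ≠ []) (hv₂ : v₂ ≠ []) (su₂ : u₂ <:+ Y) (pv₂ : v₂ <+: Z)
    (hle : u₁.length ≤ u₂.length) :
    w₁ = w₂ := by
  obtain ⟨hl₁, hf₁⟩ := h1
  obtain ⟨hl₂, hf₂⟩ := h2
  have hlu₁ : 0 < u₁.length := List.length_pos_iff.2 hu₁
  have hlv₁ : 0 < v₁.length := List.length_pos_iff.2 hv₁
  have hlu₂ : 0 < u₂.length := List.length_pos_iff.2 hu₂
  have hlv₂ : 0 < v₂.length := List.length_pos_iff.2 hv₂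
  have hsum₁ : u₁.length + v₁.length = n + 2 := by
    have := congrArg List.length e₁; simp at this; omega
  have hsum₂ : u₂.length + v₂.length = n + 2 := by
    have := congrArg List.length e₂; simp at this; omega
  have hsu : u₁ <:+ u₂ := List.suffix_of_suffix_length_le su₁ su₂ hle
  have hpv : v₂ <+: v₁ := List.prefix_of_prefix_length_le pv₂ pv₁ (by omega)
  rcases Nat.eq_or_lt_of_le hle with heq | hlt
  · rw [e₁, e₂, hsu.eq_of_length heq, hpv.eq_of_length (by omega)]
  -- proper crossing
  obtain ⟨s, hs⟩ := hsu
  obtain ⟨t', ht'⟩ := hpv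
  have hslen : s.length + u₁.length = u₂.length := by
    have := congrArg List.length hs; simp at this; omega
  have hls : 0 < s.length := by omega
  -- w₂ at position s.length equals w₁ at position 0
  have key1 : w₂[s.length]? = w₁[0]? := by
    rw [e₂, List.getElem?_append_left (by omega : s.length < u₂.length), ← hs,
      List.getElem?_append_right (le_refl s.length), Nat.sub_self,
      e₁, List.getElem?_append_left (by omega : 0 < u₁.length)]
  -- w₁ at position u₁.length + (v₂.length - 1) equals w₂ at position n+1
  have key2 : w₁[u₁.length + (v₂.length - 1)]? = w₂[n+1]? := by
    rw [e₁, List.getElem?_append_right (Nat.le_add_right _ _), Nat.add_sub_cancel_left,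
      ← ht', List.getElem?_append_left (by omega : v₂.length - 1 < v₂.length),
      e₂, List.getElem?_append_right (by omega : u₂.length ≤ n + 1),
      show n + 1 - u₂.length = v₂.length - 1 by omega]
  have hq1 : 1 ≤ u₁.length + (v₂.length - 1) := by omega
  have hq2 : u₁.length + (v₂.length - 1) ≤ n := by omega
  rcases hf₂ with hf₂ | hf₂
  · rcases hf₁ with hf₁ | hf₁
    · exact zero_case_eq hl₁ hl₂ hf₁ hf₂
    · have hd : w₁[0]? = some Alpha3.dollar := (hf₁ 0 (by omega)).2 (Or.inl rfl)
      rw [hd, hf₂ s.length (by omega)] at key1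
      simp at key1
  · have hd : w₂[n+1]? = some Alpha3.dollar := (hf₂ (n+1) (by omega)).2 (Or.inr rfl)
    rw [hd] at key2
    rcases hf₁ with hf₁ | hf₁
    · rw [hf₁ (u₁.length + (v₂.length - 1)) (by omega)] at key2
      simp at key2
    · have := (hf₁ (u₁.length + (v₂.length - 1)) (by omega)).1 key2
      omega

lemma form_eq_of_cross {n : ℕ} {w₁ w₂ : List Alpha3} (h1 : Form n w₁) (h2 : Form n w₂)
    {Y Z : List Alpha3} {u₁ v₁ u₂ v₂ : List Alpha3}
    (e₁ : w₁ = u₁ ++ v₁) (hu₁ : u₁ ≠ []) (hv₁ : v₁ ≠ []) (su₁ : u₁ <:+ Y) (pv₁ : v₁ <+: Z)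
    (e₂ : w₂ = u₂ ++ v₂) (hu₂ : u₂ ≠ []) (hv₂ : v₂ ≠ []) (su₂ : u₂ <:+ Y) (pv₂ : v₂ <+: Z) :
    w₁ = w₂ := by
  rcases le_total u₁.length u₂.length with h | h
  · exact form_eq_of_cross_aux h1 h2 e₁ hu₁ hv₁ su₁ pv₁ e₂ hu₂ hv₂ su₂ pv₂ h
  · exact (form_eq_of_cross_aux h2 h1 e₂ hu₂ hv₂ su₂ pv₂ e₁ hu₁ hv₁ su₁ pv₁ h).symm

lemma dword_inj {n k k' : ℕ} (hk : k < 2^n) (hk' : k' < 2^n)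
    (h : dword n k = dword n k') : k = k' := by
  by_contra hne
  obtain ⟨b, hb⟩ : ∃ b, Nat.testBit k b ≠ Nat.testBit k' b := by
    by_contra hall
    push_neg at hall
    exact hne (Nat.eq_of_testBit_eq hall)
  have hbn : b < n := by
    by_contra hge
    push_neg at hge
    have p1 : k < 2 ^ b := lt_of_lt_of_le hk (Nat.pow_le_pow_right (by norm_num) hge)
    have p2 : k' < 2 ^ b := lt_of_lt_of_le hk' (Nat.pow_le_pow_right (by norm_num) hge)
    rw [Nat.testBit_eq_false_of_lt p1, Nat.testBit_eq_false_of_lt p2] at hb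
    exact hb rfl
  have ht : n - b < n + 2 := by omega
  have hthis := congrArg (fun w => w[n-b]?) h
  simp only [getElem?_dword n _ _ ht] at hthis
  have hcond : ¬ (n - b = 0 ∨ n - b = n + 1) := by omega
  rw [if_neg hcond, if_neg hcond, show n - (n - b) = b by omega] at hthis
  cases hbk : Nat.testBit k b <;> cases hbk' : Nat.testBit k' b <;>
    rw [hbk, hbk'] at hthis hb <;> simp at hthis hb

/-- The character of `ShiftBin` at row `r`, column `c`. -/
def rowChar (n r c : ℕ) : Alpha3 :=
  if c / (n+2) ≤ r ∧ r < c / (n+2) + 2^n then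
    (if c % (n+2) = 0 ∨ c % (n+2) = n+1 then Alpha3.dollar
     else if Nat.testBit (r - c/(n+2)) (n - c % (n+2)) then Alpha3.one else Alpha3.zero)
  else Alpha3.zero

lemma shiftBin_f (n r c : ℕ) (hr : r < 2*2^n) (hc : c < 2^n*(n+2)) :
    (shiftBinStr n).f r c = some (rowChar n r c) := by
  show (if r < 2*2^n ∧ c < 2^n*(n+2) then _ else none) = _
  rw [if_pos ⟨hr, hc⟩]
  unfold rowChar
  by_cases hcond : c / (n+2) ≤ r ∧ r < c / (n+2) + 2^n
  · rw [if_pos hcond, if_pos hcond]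
    show (if r - c/(n+2) < 2^n ∧ c % (n+2) < n+2 then _ else none) = _
    rw [if_pos ⟨by omega, Nat.mod_lt _ (by omega)⟩]
  · rw [if_neg hcond, if_neg hcond]

lemma row_toList (n r : ℕ) (hr : r < 2*2^n) :
    ((shiftBinStr n).rowStr r).toList = (List.range (2^n*(n+2))).map (rowChar n r) := by
  have hw : (shiftBinStr n).w = 2^n*(n+2) := rfl
  rw [Str2.rowStr, hw]
  exact Str2.toList_mk'_row _ _ _ (fun j hj => shiftBin_f n r j hr hj)

lemma rowChar_block (n r j t : ℕ) (ht : t < n+2) :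
    rowChar n r (j*(n+2)+t) =
      if j ≤ r ∧ r < j + 2^n then
        (if t = 0 ∨ t = n+1 then Alpha3.dollar
         else if Nat.testBit (r - j) (n - t) then Alpha3.one else Alpha3.zero)
      else Alpha3.zero := by
  have hdiv : (j*(n+2)+t) / (n+2) = j := by
    rw [Nat.add_comm, Nat.add_mul_div_right _ _ (by omega : 0 < n+2),
      Nat.div_eq_of_lt ht, Nat.zero_add]
  have hmod : (j*(n+2)+t) % (n+2) = t := by
    rw [Nat.add_comm, Nat.add_mul_mod_self_right, Nat.mod_eq_of_lt ht]
  unfold rowChar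
  rw [hdiv, hmod]

lemma block_eq (n r j : ℕ) (hr : r < 2*2^n) (hj : j < 2^n) :
    ((((shiftBinStr n).rowStr r).toList).drop (j*(n+2))).take (n+2) =
      (List.range (n+2)).map (fun t => rowChar n r (j*(n+2)+t)) := by
  have hmul : j*(n+2) + (n+2) ≤ 2^n*(n+2) := by
    have h1 : j + 1 ≤ 2^n := hj
    have h2 := Nat.mul_le_mul_right (n+2) h1
    rw [Nat.succ_mul] at h2
    exact h2
  rw [row_toList n r hr]
  apply List.ext_getElem
  · simp
    omega
  · intro t h1 h2
    simp only [List.getElem_take, List.getElem_drop, List.getElem_map, List.getElem_range]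

lemma block_infix (n r j : ℕ) (hr : r < 2*2^n) (hj : j < 2^n) :
    (List.range (n+2)).map (fun t => rowChar n r (j*(n+2)+t)) <:+:
      ((shiftBinStr n).rowStr r).toList := by
  rw [← block_eq n r j hr hj]
  exact ((List.take_prefix _ _).isInfix).trans ((List.drop_suffix _ _).isInfix)

lemma map_block_eq_dword (n r k : ℕ) (hk : k ≤ r) (hk2 : k < 2^n) :
    (List.range (n+2)).map (fun t => rowChar n r ((r-k)*(n+2)+t)) = dword n k := by
  unfold dword
  apply List.map_congr_left
  intro t ht
  rw [List.mem_range] at ht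
  rw [rowChar_block n r (r-k) t ht, if_pos ⟨Nat.sub_le r k, by omega⟩,
    show r - (r-k) = k by omega]

lemma map_block_eq_zword (n r j : ℕ) (ht2 : ¬(j ≤ r ∧ r < j + 2^n)) :
    (List.range (n+2)).map (fun t => rowChar n r (j*(n+2)+t)) = zword n := by
  unfold zword
  apply List.map_congr_left
  intro t ht
  rw [List.mem_range] at ht
  rw [rowChar_block n r j t ht, if_neg ht2]

lemma dword_infix (n r k : ℕ) (hr : r < 2*2^n) (hk : k ≤ r) (hk2 : k < 2^n)
    (hjk : r - k < 2^n) :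
    dword n k <:+: ((shiftBinStr n).rowStr r).toList := by
  rw [← map_block_eq_dword n r k hk hk2]
  exact block_infix n r (r-k) hr hjk

lemma zword_infix (n r j : ℕ) (hr : r < 2*2^n) (hj : j < 2^n)
    (hcond : ¬(j ≤ r ∧ r < j + 2^n)) :
    zword n <:+: ((shiftBinStr n).rowStr r).toList := by
  rw [← map_block_eq_zword n r j hcond]
  exact block_infix n r j hr hj

/-- For every `n ≥ 1`, `N = 2^n`, and `i ∈ [1..2N]`, with `R`
the `i`-th row of `ShiftBin_N` (a 1D string of length `N(n+2)`), every 1D SLP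
deriving a string containing `R` as a substring has at least
`min i (2N - i + 1)` nonterminals. -/
theorem shiftbin_row_incompressible (n : ℕ) (hn : 1 ≤ n) (i : ℕ)
    (hi1 : 1 ≤ i) (hi2 : i ≤ 2 * 2 ^ n)
    (G : SLP2 Alpha3) (hwf : G.WF) (h1d : G.OneDim)
    (hsup : ((shiftBinStr n).rowStr (i - 1)).toList <:+: (G.exp).toList) :
    min i (2 * 2 ^ n - i + 1) ≤ G.numNT := by
  classical
  obtain ⟨hnv, -⟩ := h1d
  have hN2 : 2 ≤ 2^n := by
    calc 2 = 2^1 := rfl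
    _ ≤ 2^n := Nat.pow_le_pow_right (by norm_num) hn
  set r : ℕ := i - 1 with hrdef
  have hrN : r < 2*2^n := by omega
  set K : Finset ℕ := Finset.Icc (r - min r (2^n-1)) (min r (2^n-1)) with hK
  set W : Finset (List Alpha3) :=
    (K.image (dword n)) ∪ (if i = 2^n then ∅ else {zword n}) with hW
  have hWform : ∀ w ∈ W, Form n w := by
    intro w hw
    rw [hW, Finset.mem_union] at hw
    rcases hw with hw | hw
    · obtain ⟨k, hk, rfl⟩ := Finset.mem_image.1 hw
      exact form_dword n k
    · by_cases hiN : i = 2^n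
      · simp [hiN] at hw
      · simp [hiN] at hw
        rw [hw]
        exact form_zword n
  have hWinf : ∀ w ∈ W, w <:+: (G.expNT G.start).toList := by
    intro w hw
    have hrow : w <:+: ((shiftBinStr n).rowStr r).toList := by
      rw [hW, Finset.mem_union] at hw
      rcases hw with hw | hw
      · obtain ⟨k, hk, rfl⟩ := Finset.mem_image.1 hw
        rw [hK, Finset.mem_Icc] at hk
        exact dword_infix n r k hrN (by omega) (by omega) (by omega)
      · by_cases hiN : i = 2^n
        · simp [hiN] at hw
        · simp [hiN] at hw
          subst hw
          by_cases hrlt : r < 2^n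
          · exact zword_infix n r (2^n - 1) hrN (by omega) (by omega)
          · exact zword_infix n r 0 hrN (by omega) (by omega)
    exact hrow.trans hsup
  have hlen2 : ∀ w ∈ W, 2 ≤ w.length := fun w hw => by
    have := (hWform w hw).1; omega
  have hcross : ∀ w ∈ W, ∃ (X Y Z : G.V) (u v : List Alpha3),
      G.rhs X = Rhs2.horiz Y Z ∧ w = u ++ v ∧ u ≠ [] ∧ v ≠ [] ∧
      u <:+ (G.expNT Y).toList ∧ v <+: (G.expNT Z).toList := fun w hw =>
    SLP2.crossing hnv w (hlen2 w hw) (G.rank G.start) G.start le_rfl (hWinf w hw)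
  choose F Ych Zch uch vch hhoriz he hu hv hsu hpv using hcross
  letI := G.fintypeV
  have hcard : W.card ≤ G.numNT := by
    have h1 : W.card ≤ (Finset.univ : Finset G.V).card := by
      apply Finset.card_le_card_of_injOn (fun w => if h : w ∈ W then F w h else G.start)
        (fun _ _ => Finset.mem_univ _)
      intro w₁ h₁ w₂ h₂ heq
      rw [Finset.mem_coe] at h₁ h₂
      simp only [dif_pos h₁, dif_pos h₂] at heq
      have e1 := hhoriz w₁ h₁
      have e2 := hhoriz w₂ h₂
      rw [heq] at e1
      have e3 : Rhs2.horiz (Ych w₁ h₁) (Zch w₁ h₁) = Rhs2.horiz (Ych w₂ h₂) (Zch w₂ h₂) :=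
        e1.symm.trans e2
      simp only [Rhs2.horiz.injEq] at e3
      have hsu2 := hsu w₂ h₂
      have hpv2 := hpv w₂ h₂
      rw [← e3.1] at hsu2
      rw [← e3.2] at hpv2
      exact form_eq_of_cross (hWform w₁ h₁) (hWform w₂ h₂)
        (he w₁ h₁) (hu w₁ h₁) (hv w₁ h₁) (hsu w₁ h₁) (hpv w₁ h₁)
        (he w₂ h₂) (hu w₂ h₂) (hv w₂ h₂) hsu2 hpv2
    have h2 : G.numNT = Fintype.card G.V := rfl
    rw [h2, ← Finset.card_univ]
    exact h1
  have hKcard : K.card = min r (2^n-1) + 1 - (r - min r (2^n-1)) := by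
    rw [hK, Nat.card_Icc]
  have himg : (K.image (dword n)).card = K.card := by
    apply Finset.card_image_of_injOn
    intro a ha b hb hab
    rw [Finset.mem_coe, hK, Finset.mem_Icc] at ha hb
    exact dword_inj (by omega) (by omega) hab
  have hWcard : min i (2*2^n - i + 1) ≤ W.card := by
    by_cases hiN : i = 2^n
    · rw [hW, if_pos hiN, Finset.union_empty, himg, hKcard]
      omega
    · have hdisj : Disjoint (K.image (dword n)) {zword n} := by
        rw [Finset.disjoint_singleton_right]
        intro hmem
        obtain ⟨k, hk, hdw⟩ := Finset.mem_image.1 hmem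
        have h0 := congrArg (fun w => w[0]?) hdw
        simp only [getElem?_dword n k 0 (by omega), getElem?_zword n 0 (by omega)] at h0
        simp at h0
      rw [hW, if_neg hiN, Finset.card_union_of_disjoint hdisj, Finset.card_singleton,
        himg, hKcard]
      omega
  exact le_trans hWcard hcard
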